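/- Let q be odd, let B be an n×n symmetric matrix over F_q of rank r ≥ 1, and let δ ∈ F_q^× and M ∈ GL_n(F_q) be such that B = M·diag(1^{r−1}, δ, 0^{n−r})·Mᵀ. For v ∈ F_q^n, let A_v be the (n+1)×(n+1) symmetric matrix with (1,1)-entry 0, first row (0, v), first column (0, v)ᵀ, and lower-right n×n block B. Then, among the q^n matrices A_v: exactly N_δ(r) have rank r, exactly q^r − N_δ(r) have rank r+1, and exactly q^n − q^r have rank r+2. -/

import Mathlib

open Matrix
section Aux
set_option linter.unusedSectionVars false
set_option maxHeartbeats 1000000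
variable {F : Type} [Field F] {n : ℕ}
set_option linter.unusedSectionVars false
variable {F : Type} [Field F] {n : ℕ}

/-- border with arbitrary corner -/
def borderC (a : F) (B : Matrix (Fin n) (Fin n) F) (v : Fin n → F) :
    Matrix (Fin (n + 1)) (Fin (n + 1)) F :=
  Matrix.of (Fin.cons (Fin.cons a v) (fun i => Fin.cons (v i) (B i)))

@[simp] lemma borderC_zero_zero (a : F) (B : Matrix (Fin n) (Fin n) F) (v : Fin n → F) :
    borderC a B v 0 0 = a := rfl
@[simp] lemma borderC_zero_succ (a : F) (B : Matrix (Fin n) (Fin n) F) (v : Fin n → F) (j : Fin n) :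
    borderC a B v 0 j.succ = v j := rfl
@[simp] lemma borderC_succ_zero (a : F) (B : Matrix (Fin n) (Fin n) F) (v : Fin n → F) (i : Fin n) :
    borderC a B v i.succ 0 = v i := by simp [borderC]
@[simp] lemma borderC_succ_succ (a : F) (B : Matrix (Fin n) (Fin n) F) (v : Fin n → F) (i j : Fin n) :
    borderC a B v i.succ j.succ = B i j := by simp [borderC]

def oneOplus (M : Matrix (Fin n) (Fin n) F) : Matrix (Fin (n + 1)) (Fin (n + 1)) F :=
  Matrix.of (Fin.cons (Fin.cons 1 0) (fun i => Fin.cons 0 (M i)))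

@[simp] lemma oneOplus_zero_zero (M : Matrix (Fin n) (Fin n) F) : oneOplus M 0 0 = 1 := rfl
@[simp] lemma oneOplus_zero_succ (M : Matrix (Fin n) (Fin n) F) (j : Fin n) :
    oneOplus M 0 j.succ = 0 := rfl
@[simp] lemma oneOplus_succ_zero (M : Matrix (Fin n) (Fin n) F) (i : Fin n) :
    oneOplus M i.succ 0 = 0 := by simp [oneOplus]
@[simp] lemma oneOplus_succ_succ (M : Matrix (Fin n) (Fin n) F) (i j : Fin n) :
    oneOplus M i.succ j.succ = M i j := by simp [oneOplus]

lemma oneOplus_mul (M N : Matrix (Fin n) (Fin n) F) :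
    oneOplus M * oneOplus N = oneOplus (M * N) := by
  ext i j
  refine Fin.cases ?_ (fun i => ?_) i <;> refine Fin.cases ?_ (fun j => ?_) j <;>
    simp [mul_apply, Fin.sum_univ_succ]

lemma oneOplus_one : oneOplus (1 : Matrix (Fin n) (Fin n) F) = 1 := by
  ext i j
  refine Fin.cases ?_ (fun i => ?_) i <;> refine Fin.cases ?_ (fun j => ?_) j <;>
    simp [one_apply, Fin.succ_ne_zero, (Fin.succ_ne_zero _).symm, Fin.succ_inj]

lemma isUnit_oneOplus {M : Matrix (Fin n) (Fin n) F} (h : IsUnit M) :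
    IsUnit (oneOplus M) := by
  have h1 : oneOplus M * oneOplus (M⁻¹) = 1 := by
    rw [oneOplus_mul, Matrix.mul_nonsing_inv _ ((Matrix.isUnit_iff_isUnit_det M).mp h),
      oneOplus_one]
  rw [Matrix.isUnit_iff_isUnit_det _]
  exact IsUnit.of_mul_eq_one _ (by rw [← Matrix.det_mul, h1, Matrix.det_one])

lemma oneOplus_conj (M : Matrix (Fin n) (Fin n) F) (a : F) (B : Matrix (Fin n) (Fin n) F)
    (v : Fin n → F) :
    oneOplus M * borderC a B v * (oneOplus M)ᵀ = borderC a (M * B * Mᵀ) (M *ᵥ v) := by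
  ext i j
  refine Fin.cases ?_ (fun i => ?_) i <;> refine Fin.cases ?_ (fun j => ?_) j <;>
    simp [mul_apply, Fin.sum_univ_succ, mulVec, dotProduct, Finset.mul_sum, Finset.sum_mul,
      mul_comm, mul_assoc, mul_left_comm]
  · rw [Finset.sum_comm]

def rowAdd (c : Fin n → F) : Matrix (Fin (n + 1)) (Fin (n + 1)) F :=
  Matrix.of (Fin.cons (Fin.cons 1 c) (fun i => Fin.cons 0 ((1 : Matrix (Fin n) (Fin n) F) i)))

@[simp] lemma rowAdd_zero_zero (c : Fin n → F) : rowAdd c 0 0 = 1 := rfl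
@[simp] lemma rowAdd_zero_succ (c : Fin n → F) (j : Fin n) : rowAdd c 0 j.succ = c j := rfl
@[simp] lemma rowAdd_succ_zero (c : Fin n → F) (i : Fin n) : rowAdd c i.succ 0 = 0 := by
  simp [rowAdd]
@[simp] lemma rowAdd_succ_succ (c : Fin n → F) (i j : Fin n) :
    rowAdd c i.succ j.succ = (1 : Matrix (Fin n) (Fin n) F) i j := by simp [rowAdd]

lemma rowAdd_mul_rowAdd (c c' : Fin n → F) : rowAdd c * rowAdd c' = rowAdd (c + c') := by
  ext i j
  refine Fin.cases ?_ (fun i => ?_) i <;> refine Fin.cases ?_ (fun j => ?_) j <;>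
    simp [mul_apply, Fin.sum_univ_succ, one_apply, Finset.sum_ite_eq, Finset.sum_ite_eq', add_comm]

lemma rowAdd_zero : rowAdd (0 : Fin n → F) = 1 := by
  ext i j
  refine Fin.cases ?_ (fun i => ?_) i <;> refine Fin.cases ?_ (fun j => ?_) j <;>
    simp [one_apply, Fin.succ_ne_zero, (Fin.succ_ne_zero _).symm, Fin.succ_inj]

lemma isUnit_rowAdd (c : Fin n → F) : IsUnit (rowAdd c) := by
  have h1 : rowAdd c * rowAdd (-c) = 1 := by rw [rowAdd_mul_rowAdd]; simp [rowAdd_zero]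
  rw [Matrix.isUnit_iff_isUnit_det _]
  exact IsUnit.of_mul_eq_one _ (by rw [← Matrix.det_mul, h1, Matrix.det_one])

lemma rowAdd_conj (c : Fin n → F) (a : F) (B : Matrix (Fin n) (Fin n) F)
    (hB : Bᵀ = B) (w : Fin n → F) :
    rowAdd c * borderC a B w * (rowAdd c)ᵀ =
      borderC (a + 2 * (c ⬝ᵥ w) + c ⬝ᵥ (B *ᵥ c)) B (w + B *ᵥ c) := by
  have hBs : ∀ i j, B j i = B i j := fun i j => (congrFun (congrFun hB j) i).symm
  ext i j
  refine Fin.cases ?_ (fun i => ?_) i <;> refine Fin.cases ?_ (fun j => ?_) j <;>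
    simp [mul_apply, Fin.sum_univ_succ, one_apply, Finset.sum_ite_eq, Finset.sum_ite_eq',
      mulVec, dotProduct, Finset.mul_sum, Finset.sum_mul, Finset.sum_add_distrib, mul_comm,
      mul_left_comm, two_mul, add_assoc]
  · simp [mul_add, Finset.mul_sum, Finset.sum_add_distrib]
    ring_nf
    congr 1
    · rw [Finset.sum_mul]
    · exact Finset.sum_congr rfl fun x _ => Finset.sum_congr rfl fun y _ => by rw [hBs x y]
  · simp [hBs, mul_comm]

lemma colAdd_conj (c : Fin n → F) (b : F) (B : Matrix (Fin n) (Fin n) F) (w : Fin n → F) :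
    (rowAdd c)ᵀ * borderC b B w * rowAdd c =
      borderC b (Matrix.of fun i k => B i k + b * c i * c k + c i * w k + w i * c k)
        (w + b • c) := by
  ext i j
  refine Fin.cases ?_ (fun i => ?_) i <;> refine Fin.cases ?_ (fun j => ?_) j <;>
    simp [mul_apply, Fin.sum_univ_succ, one_apply, Finset.sum_ite_eq, Finset.sum_ite_eq',
      Finset.mul_sum, Finset.sum_mul, Finset.sum_add_distrib, mul_comm, mul_left_comm,
      add_assoc] <;> ring

lemma rank_conj {m : ℕ} (P A : Matrix (Fin m) (Fin m) F) (hP : IsUnit P) :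
    (P * A * Pᵀ).rank = A.rank := by
  have hd : IsUnit P.det := (Matrix.isUnit_iff_isUnit_det P).mp hP
  rw [Matrix.rank_mul_eq_left_of_isUnit_det Pᵀ (P * A) (by simpa using hd),
    Matrix.rank_mul_eq_right_of_isUnit_det P A hd]

lemma borderC_diagonal (a : F) (e : Fin n → F) :
    borderC a (diagonal e) 0 = diagonal (Fin.cons a e) := by
  ext i j
  refine Fin.cases ?_ (fun i => ?_) i <;> refine Fin.cases ?_ (fun j => ?_) j <;>
    simp [diagonal_apply, Fin.succ_ne_zero, (Fin.succ_ne_zero _).symm, Fin.succ_inj]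

lemma sum_indicator_lt {r : ℕ} (hrn : r ≤ n) :
    (∑ i : Fin n, if (i : ℕ) < r then 1 else 0 : ℕ) = r := by
  rw [Fin.sum_univ_eq_sum_range (fun i => if i < r then 1 else 0) n, ← Finset.card_filter]
  have : Finset.filter (fun i => i < r) (Finset.range n) = Finset.range r := by
    ext x; simp only [Finset.mem_filter, Finset.mem_range]; omega
  rw [this, Finset.card_range]


def dvec (n r : ℕ) (δ : F) : Fin n → F :=
  fun i => if (i : ℕ) < r - 1 then 1 else if (i : ℕ) = r - 1 then δ else 0

lemma dvec_ne {r : ℕ} {δ : F} (hr : 1 ≤ r) (hδ : δ ≠ 0) (i : Fin n) :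
    dvec n r δ i ≠ 0 ↔ (i : ℕ) < r := by
  unfold dvec
  split_ifs with h1 h2'
  · simpa using by omega
  · simpa [hδ] using by omega
  · simpa using by omega

noncomputable def Qf (n r : ℕ) (δ : F) (w : Fin n → F) : F :=
  ∑ i, w i ^ 2 * (dvec n r δ i)⁻¹

lemma stepE {r : ℕ} {δ : F} (hr : 1 ≤ r) (hδ : δ ≠ 0) (w : Fin n → F) :
    ∃ P : Matrix (Fin (n + 1)) (Fin (n + 1)) F, IsUnit P ∧
      P * borderC 0 (diagonal (dvec n r δ)) w * Pᵀ =
        borderC (-(Qf n r δ w)) (diagonal (dvec n r δ))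
          (fun i => if (i : ℕ) < r then 0 else w i) := by
  set d := dvec n r δ with hd
  set c₁ : Fin n → F := fun i => -(w i) * (d i)⁻¹ with hc
  refine ⟨rowAdd c₁, isUnit_rowAdd _, ?_⟩
  rw [rowAdd_conj _ _ _ (diagonal_transpose _) w]
  have hcorner : (0 + 2 * (c₁ ⬝ᵥ w) + c₁ ⬝ᵥ (diagonal d *ᵥ c₁)) = -(Qf n r δ w) := by
    have key : ∀ i, 2 * (c₁ i * w i) + c₁ i * (d i * c₁ i) = -(w i ^ 2 * (d i)⁻¹) := by
      intro i
      by_cases hdi : d i = 0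
      · simp [hc, hdi]
      · rw [hc]
        field_simp
        ring
    simp only [dotProduct, Qf, ← hd]
    simp only [mulVec_diagonal]
    rw [zero_add, Finset.mul_sum, ← Finset.sum_add_distrib, ← Finset.sum_neg_distrib]
    exact Finset.sum_congr rfl fun i _ => key i
  have hvec : w + diagonal d *ᵥ c₁ = (fun i : Fin n => if (i : ℕ) < r then 0 else w i) := by
    funext i
    by_cases hi : (i : ℕ) < r
    · have hdi : d i ≠ 0 := (dvec_ne hr hδ i).mpr hi
      simp only [Pi.add_apply, hc, hi, if_true]
      rw [mulVec_diagonal]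
      field_simp
      ring
    · have hdi : d i = 0 := by
        by_contra h
        exact hi ((dvec_ne hr hδ i).mp h)
      simp only [Pi.add_apply, hi, if_false]
      rw [mulVec_diagonal]
      simp [hdi]
  rw [hcorner, hvec]

lemma card_cons0 {r : ℕ} (hrn : r ≤ n) (a : F) (e : Fin n → F)
    (he : ∀ i, e i ≠ 0 ↔ (i : ℕ) < r) (ha : a = 0) :
    Nat.card {x : Fin (n + 1) // (Fin.cons a e : Fin (n + 1) → F) x ≠ 0} = r := by
  classical
  rw [Nat.card_eq_fintype_card, Fintype.card_subtype, Finset.card_filter, Fin.sum_univ_succ]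
  simp only [Fin.cons_zero, Fin.cons_succ, ha]
  rw [if_neg (by simp), zero_add]
  calc (∑ i : Fin n, if e i ≠ 0 then 1 else 0)
      = ∑ i : Fin n, if (i : ℕ) < r then 1 else 0 :=
        Finset.sum_congr rfl fun i _ => by simp [he i]
    _ = r := sum_indicator_lt hrn

lemma card_cons1 {r : ℕ} (hrn : r ≤ n) (a : F) (e : Fin n → F)
    (he : ∀ i, e i ≠ 0 ↔ (i : ℕ) < r) (ha : a ≠ 0) :
    Nat.card {x : Fin (n + 1) // (Fin.cons a e : Fin (n + 1) → F) x ≠ 0} = r + 1 := by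
  classical
  rw [Nat.card_eq_fintype_card, Fintype.card_subtype, Finset.card_filter, Fin.sum_univ_succ]
  simp only [Fin.cons_zero, Fin.cons_succ]
  rw [if_pos ha]
  have : (∑ i : Fin n, if e i ≠ 0 then 1 else 0) = r := by
    calc (∑ i : Fin n, if e i ≠ 0 then 1 else 0)
        = ∑ i : Fin n, if (i : ℕ) < r then 1 else 0 :=
          Finset.sum_congr rfl fun i _ => by simp [he i]
      _ = r := sum_indicator_lt hrn
  omega

lemma rank_caseA0 {r : ℕ} {δ : F} (hr : 1 ≤ r) (hrn : r ≤ n) (hδ : δ ≠ 0) (w : Fin n → F)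
    (hw : ∀ i : Fin n, r ≤ (i : ℕ) → w i = 0) (hQ : Qf n r δ w = 0) :
    (borderC 0 (diagonal (dvec n r δ)) w).rank = r := by
  classical
  obtain ⟨P, hP, hPe⟩ := stepE hr hδ w
  have hv : (fun i : Fin n => if (i : ℕ) < r then 0 else w i) = 0 := by
    funext i
    by_cases hi : (i : ℕ) < r
    · simp [hi]
    · simp [hi, hw i (le_of_not_gt hi)]
  rw [hv] at hPe
  rw [← rank_conj P _ hP, hPe, borderC_diagonal, Matrix.rank_diagonal,
    ← Nat.card_eq_fintype_card]
  exact card_cons0 hrn _ _ (fun i => dvec_ne hr hδ i) (by simp [hQ])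

lemma rank_caseA1 {r : ℕ} {δ : F} (hr : 1 ≤ r) (hrn : r ≤ n) (hδ : δ ≠ 0) (w : Fin n → F)
    (hw : ∀ i : Fin n, r ≤ (i : ℕ) → w i = 0) (hQ : Qf n r δ w ≠ 0) :
    (borderC 0 (diagonal (dvec n r δ)) w).rank = r + 1 := by
  classical
  obtain ⟨P, hP, hPe⟩ := stepE hr hδ w
  have hv : (fun i : Fin n => if (i : ℕ) < r then 0 else w i) = 0 := by
    funext i
    by_cases hi : (i : ℕ) < r
    · simp [hi]
    · simp [hi, hw i (le_of_not_gt hi)]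
  rw [hv] at hPe
  rw [← rank_conj P _ hP, hPe, borderC_diagonal, Matrix.rank_diagonal,
    ← Nat.card_eq_fintype_card]
  exact card_cons1 hrn _ _ (fun i => dvec_ne hr hδ i) (by simpa using hQ)


lemma rank_caseB {r : ℕ} {δ : F} (hr : 1 ≤ r) (hrn : r ≤ n) (hδ : δ ≠ 0) (h2 : (2 : F) ≠ 0)
    (w : Fin n → F) (j : Fin n) (hj : ¬ (j : ℕ) < r) (hwj : w j ≠ 0) :
    (borderC 0 (diagonal (dvec n r δ)) w).rank = r + 2 := by
  classical
  set d := dvec n r δ with hd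
  set D := diagonal d with hD
  obtain ⟨P, hP, hPe⟩ := stepE hr hδ w
  set u : Fin n → F := fun i => if (i : ℕ) < r then 0 else w i with hu
  have huj : u j = w j := by simp [hu, hj]
  have hujne : u j ≠ 0 := by rw [huj]; exact hwj
  have hdj : d j = 0 := by
    by_contra h
    exact hj ((dvec_ne hr hδ j).mp h)
  have hD0 : ∀ t : F, D *ᵥ (Pi.single j t) = 0 := by
    intro t
    funext i
    rw [hD, mulVec_diagonal]
    by_cases hi : i = j
    · subst hi; simp [hdj]
    · simp [Pi.single_apply, hi]
  set Q := Qf n r δ w with hQ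
  -- Step F : clear the corner
  set c₂ : Fin n → F := Pi.single j (Q * (2 * u j)⁻¹) with hc₂
  have h2u : (2 : F) * u j ≠ 0 := mul_ne_zero h2 hujne
  have step2 : rowAdd c₂ * borderC (-Q) D u * (rowAdd c₂)ᵀ = borderC 0 D u := by
    rw [rowAdd_conj _ _ _ (by rw [hD, diagonal_transpose]) u, hc₂, hD0, dotProduct_zero,
      single_dotProduct, huj]
    simp only [add_zero]
    have hcor2 : -Q + 2 * (Q * (2 * w j)⁻¹ * w j) = 0 := by
      field_simp
      ring
    rw [hcor2]
  -- Step N : concentrate the vector at j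
  set C : Matrix (Fin n) (Fin n) F :=
    Matrix.of (fun i k => if k = j ∧ i ≠ j then u i * (u j)⁻¹ else 0) with hC
  set N : Matrix (Fin n) (Fin n) F := 1 - C with hN
  have hCC : C * C = 0 := by
    ext i k
    rw [mul_apply]
    refine Finset.sum_eq_zero fun l _ => ?_
    by_cases hl : l = j
    · subst hl; simp [hC]
    · simp [hC, hl]
  have hNunit : IsUnit N := by
    have h1 : N * (1 + C) = 1 := by
      rw [hN, sub_mul, one_mul, mul_add, mul_one, hCC]
      abel
    rw [Matrix.isUnit_iff_isUnit_det _]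
    exact IsUnit.of_mul_eq_one _ (by rw [← Matrix.det_mul, h1, Matrix.det_one])
  have hCD : C * D = 0 := by
    ext i k
    rw [mul_apply]
    refine Finset.sum_eq_zero fun l _ => ?_
    by_cases hl : l = j
    · rw [hl, hD]
      by_cases hk : j = k
      · rw [← hk]
        simp [hdj]
      · simp [diagonal_apply_ne _ hk]
    · simp [hC, hl]
  have hDC : D * Cᵀ = 0 := by
    ext i k
    rw [mul_apply]
    refine Finset.sum_eq_zero fun l _ => ?_
    rw [transpose_apply]
    by_cases hl : l = j
    · rw [hl, hD]
      by_cases hi : i = j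
      · rw [hi]
        simp [hdj]
      · simp [diagonal_apply_ne _ hi]
    · simp [hC, hl]
  have hNDN : N * D * Nᵀ = D := by
    rw [hN, transpose_sub, transpose_one, sub_mul, one_mul, hCD, sub_zero, mul_sub, mul_one,
      hDC, sub_zero]
  have hNu : N *ᵥ u = Pi.single j (u j) := by
    funext i
    rw [hN, sub_mulVec]
    have hCu : (C *ᵥ u) i = if i = j then 0 else u i := by
      rw [mulVec, dotProduct,
        Finset.sum_eq_single j (fun l _ hl => by simp [hC, hl]) (by simp)]
      by_cases hi : i = j
      · simp [hC, hi]
      · simp [hC, hi]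
        field_simp
    rw [Pi.sub_apply, one_mulVec, hCu]
    by_cases hi : i = j
    · rw [hi]
      simp
    · simp [Pi.single_apply, hi]
  have step3 : oneOplus N * borderC 0 D u * (oneOplus N)ᵀ = borderC 0 D (Pi.single j (u j)) := by
    rw [oneOplus_conj, hNDN, hNu]
  -- Step G : make corner 1
  set c₃ : Fin n → F := Pi.single j ((2 * u j)⁻¹) with hc₃
  have step4 : rowAdd c₃ * borderC 0 D (Pi.single j (u j)) * (rowAdd c₃)ᵀ =
      borderC 1 D (Pi.single j (u j)) := by
    rw [rowAdd_conj _ _ _ (by rw [hD, diagonal_transpose]) _, hc₃, hD0, dotProduct_zero,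
      single_dotProduct, Pi.single_eq_same]
    simp only [add_zero, zero_add]
    have hcor4 : (2 : F) * ((2 * u j)⁻¹ * u j) = 1 := by
      field_simp
    rw [hcor4]
  -- Step H : clear the vector using the corner
  set d'' : Fin n → F := fun i => if i = j then -(u j) ^ 2 else d i with hd''
  set c₄ : Fin n → F := Pi.single j (-(u j)) with hc₄
  have step5 : (rowAdd c₄)ᵀ * borderC 1 D (Pi.single j (u j)) * rowAdd c₄ =
      borderC 1 (diagonal d'') 0 := by
    have hblock : (Matrix.of fun i k => D i k + 1 * c₄ i * c₄ k +
        c₄ i * (Pi.single j (u j) : Fin n → F) k +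
        (Pi.single j (u j) : Fin n → F) i * c₄ k) = diagonal d'' := by
      ext i k
      rw [Matrix.of_apply, hc₄, hD]
      by_cases hi : i = j <;> by_cases hk : k = j
      · rw [hi, hk]
        simp [hdj, hd'', Matrix.diagonal_apply]
        ring
      · have hik : i ≠ k := by rw [hi]; exact fun h => hk h.symm
        have hjk : j ≠ k := fun h => hk h.symm
        simp [Pi.single_apply, hi, hk, hd'', Matrix.diagonal_apply, hik, hjk]
      · have hik : i ≠ k := by rw [hk]; exact hi
        have hjk : i ≠ j := hi
        simp [Pi.single_apply, hi, hk, hd'', Matrix.diagonal_apply, hik, hjk]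
      · by_cases hik : i = k
        · rw [← hik]
          simp [Pi.single_apply, hi, hd'', Matrix.diagonal_apply]
        · simp [Pi.single_apply, hi, hk, hd'', Matrix.diagonal_apply, hik]
    have hvec2 : Pi.single j (u j) + (1 : F) • c₄ = 0 := by
      rw [hc₄, one_smul, ← Pi.single_add]
      simp
    rw [colAdd_conj, hblock, hvec2]
  -- assemble
  have e1 : (borderC 0 D w).rank = (borderC (-Q) D u).rank := by
    rw [← rank_conj P _ hP, hPe]
  have e2 : (borderC (-Q) D u).rank = (borderC 0 D u).rank := by
    rw [← step2, rank_conj _ _ (isUnit_rowAdd _)]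
  have e3 : (borderC 0 D u).rank = (borderC 0 D (Pi.single j (u j))).rank := by
    rw [← step3, rank_conj _ _ (isUnit_oneOplus hNunit)]
  have e4 : (borderC 0 D (Pi.single j (u j))).rank = (borderC 1 D (Pi.single j (u j))).rank := by
    rw [← step4, rank_conj _ _ (isUnit_rowAdd _)]
  have e5 : (borderC 1 D (Pi.single j (u j))).rank = (borderC 1 (diagonal d'') 0).rank := by
    have hunit : IsUnit (rowAdd c₄)ᵀ := by
      rw [Matrix.isUnit_iff_isUnit_det _, Matrix.det_transpose]
      exact (Matrix.isUnit_iff_isUnit_det _).mp (isUnit_rowAdd _)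
    have h := rank_conj ((rowAdd c₄)ᵀ) (borderC 1 D (Pi.single j (u j))) hunit
    rw [transpose_transpose] at h
    rw [← h, step5]
  rw [e1, e2, e3, e4, e5, borderC_diagonal, Matrix.rank_diagonal, ← Nat.card_eq_fintype_card]
  -- count
  rw [Nat.card_eq_fintype_card, Fintype.card_subtype, Finset.card_filter, Fin.sum_univ_succ]
  simp only [Fin.cons_zero, Fin.cons_succ]
  rw [if_pos one_ne_zero]
  have : (∑ i : Fin n, if d'' i ≠ 0 then 1 else 0) = r + 1 := by
    have hsplit : ∀ i : Fin n, (if d'' i ≠ 0 then (1 : ℕ) else 0) =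
        (if (i : ℕ) < r then 1 else 0) + (if i = j then 1 else 0) := by
      intro i
      by_cases hi : i = j
      · subst hi
        simp [hd'', hj, pow_ne_zero, hujne]
      · simp only [hd'', if_neg hi]
        by_cases hir : (i : ℕ) < r
        · simp [hir, (dvec_ne hr hδ i).mpr hir, hi, hd]
        · have : d i = 0 := by
            by_contra h
            exact hir ((dvec_ne hr hδ i).mp h)
          simp [this, hir, hi]
    rw [Finset.sum_congr rfl fun i _ => hsplit i, Finset.sum_add_distrib, sum_indicator_lt hrn,
      Finset.sum_ite_eq' Finset.univ j (fun _ => 1)]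
    simp
  omega


section Count
variable {r : ℕ}

/-- extend by zero -/
def extz (hrn : r ≤ n) (x : Fin r → F) : Fin n → F :=
  fun i => if h : (i : ℕ) < r then x ⟨i, h⟩ else 0

lemma extz_S (hrn : r ≤ n) (x : Fin r → F) (i : Fin n) (hi : ¬ (i : ℕ) < r) :
    extz hrn x i = 0 := dif_neg hi

lemma extz_castLE (hrn : r ≤ n) (x : Fin r → F) (y : Fin r) :
    extz hrn x (Fin.castLE hrn y) = x y := by
  unfold extz
  rw [dif_pos (by simpa using y.2)]
  exact congrArg x (Fin.ext rfl)

lemma extz_restr (hrn : r ≤ n) (w : Fin n → F) (hw : ∀ i : Fin n, ¬ (i : ℕ) < r → w i = 0) :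
    extz hrn (fun y => w (Fin.castLE hrn y)) = w := by
  funext i
  unfold extz
  by_cases h : (i : ℕ) < r
  · rw [dif_pos h]
    congr 1
  · rw [dif_neg h, (hw i h).symm]

def scaleδ (δ : F) (r : ℕ) (x : Fin r → F) : Fin r → F :=
  fun y => if (y : ℕ) = r - 1 then δ * x y else x y

def unscaleδ (δ : F) (r : ℕ) (x : Fin r → F) : Fin r → F :=
  fun y => if (y : ℕ) = r - 1 then δ⁻¹ * x y else x y

lemma scale_unscale {δ : F} (hδ : δ ≠ 0) (x : Fin r → F) :
    scaleδ δ r (unscaleδ δ r x) = x := by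
  funext y
  simp only [scaleδ, unscaleδ]
  by_cases h : (y : ℕ) = r - 1
  · simp only [if_pos h]
    field_simp
  · simp only [if_neg h]

lemma unscale_scale {δ : F} (hδ : δ ≠ 0) (x : Fin r → F) :
    unscaleδ δ r (scaleδ δ r x) = x := by
  funext y
  simp only [scaleδ, unscaleδ]
  by_cases h : (y : ℕ) = r - 1
  · simp only [if_pos h]
    field_simp
  · simp only [if_neg h]

lemma sum_vanish (hrn : r ≤ n) (f : Fin n → F) (hf : ∀ i : Fin n, ¬ (i : ℕ) < r → f i = 0) :
    ∑ i, f i = ∑ y : Fin r, f (Fin.castLE hrn y) := by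
  classical
  have h1 : ∑ i ∈ Finset.univ.map (Fin.castLEEmb hrn), f i =
      ∑ y : Fin r, f (Fin.castLE hrn y) := by
    rw [Finset.sum_map]
    rfl
  rw [← h1]
  refine (Finset.sum_subset (Finset.subset_univ _) fun i _ hi => ?_).symm
  refine hf i fun hlt => hi ?_
  exact Finset.mem_map.mpr ⟨⟨(i : ℕ), hlt⟩, Finset.mem_univ _, Fin.ext rfl⟩

lemma Qf_extz_scale {δ : F} (hδ : δ ≠ 0) (hr : 1 ≤ r) (hrn : r ≤ n) (x : Fin r → F) :
    Qf n r δ (extz hrn (scaleδ δ r x)) =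
      ∑ y : Fin r, (if (y : ℕ) = r - 1 then δ else 1) * x y ^ 2 := by
  unfold Qf
  rw [sum_vanish hrn _ (fun i hi => by rw [extz_S hrn _ i hi]; ring)]
  refine Finset.sum_congr rfl fun y _ => ?_
  rw [extz_castLE]
  have hy : (Fin.castLE hrn y : ℕ) = (y : ℕ) := rfl
  unfold scaleδ dvec
  rw [hy]
  by_cases h : (y : ℕ) = r - 1
  · rw [if_pos h, if_pos h, if_neg (by omega), if_pos h]
    field_simp
  · have hlt : (y : ℕ) < r - 1 := by have := y.2; omega
    rw [if_neg h, if_pos hlt, if_neg h]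
    simp

def countEquiv {δ : F} (hδ : δ ≠ 0) (hr : 1 ≤ r) (hrn : r ≤ n) (p : F → Prop) :
    {x : Fin r → F // p (∑ y : Fin r, (if (y : ℕ) = r - 1 then δ else 1) * x y ^ 2)} ≃
      {w : Fin n → F // (∀ i : Fin n, ¬ (i : ℕ) < r → w i = 0) ∧ p (Qf n r δ w)} where
  toFun x := ⟨extz hrn (scaleδ δ r x.1), fun i hi => extz_S hrn _ i hi,
    by rw [Qf_extz_scale hδ hr hrn]; exact x.2⟩
  invFun w := ⟨unscaleδ δ r (fun y => w.1 (Fin.castLE hrn y)), by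
    have h1 : (∑ y : Fin r, (if (y : ℕ) = r - 1 then δ else 1) *
        (unscaleδ δ r (fun y => w.1 (Fin.castLE hrn y))) y ^ 2) = Qf n r δ w.1 := by
      rw [← Qf_extz_scale hδ hr hrn, scale_unscale hδ, extz_restr hrn _ w.2.1]
    rw [h1]
    exact w.2.2⟩
  left_inv x := by
    apply Subtype.ext
    have h1 : (fun y => extz hrn (scaleδ δ r x.1) (Fin.castLE hrn y)) = scaleδ δ r x.1 := by
      funext y
      rw [extz_castLE]
    simp only [h1, unscale_scale hδ]
  right_inv w := by
    apply Subtype.ext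
    simp only [scale_unscale hδ, extz_restr hrn _ w.2.1]

def restrEquiv (hrn : r ≤ n) :
    (Fin r → F) ≃ {w : Fin n → F // ∀ i : Fin n, ¬ (i : ℕ) < r → w i = 0} where
  toFun x := ⟨extz hrn x, fun i hi => extz_S hrn _ i hi⟩
  invFun w := fun y => w.1 (Fin.castLE hrn y)
  left_inv x := by
    funext y
    exact extz_castLE hrn x y
  right_inv w := Subtype.ext (extz_restr hrn _ w.2)

end Count
end Aux

/-- `N_δ(m)`: the number of `x ∈ F^m` with `x₁² + ⋯ + x_{m-1}² + δ·x_m² = 0`. -/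
noncomputable def Ndelta (F : Type) [Field F] [Fintype F] (δ : F) (m : ℕ) : ℕ :=
  Nat.card {x : Fin m → F //
    ∑ i : Fin m, (if (i : ℕ) = m - 1 then δ else 1) * x i ^ 2 = 0}

/-- The diagonal matrix `diag(1^a, c, 0^(n-a-1))`. -/
def diagSeq (F : Type) [Field F] (n a : ℕ) (c : F) : Matrix (Fin n) (Fin n) F :=
  Matrix.diagonal (fun i => if (i : ℕ) < a then 1 else if (i : ℕ) = a then c else 0)

/-- The `(n+1) × (n+1)` matrix with `(1,1)`-entry `0`, first row `(0, v)`,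
first column `(0, v)ᵀ`, and lower-right `n × n` block `B`. -/
def border {F : Type} [Field F] {n : ℕ} (B : Matrix (Fin n) (Fin n) F)
    (v : Fin n → F) : Matrix (Fin (n + 1)) (Fin (n + 1)) F :=
  Matrix.of (Fin.cons (Fin.cons 0 v) (fun i => Fin.cons (v i) (B i)))

theorem stmt12 (F : Type) [Field F] [Fintype F] (q : ℕ) (hq : Fintype.card F = q)
    (hodd : Odd q) (n r : ℕ) (hr : 1 ≤ r)
    (B : Matrix (Fin n) (Fin n) F) (hB : B.IsSymm) (hrank : B.rank = r)
    (δ : F) (hδ : δ ≠ 0) (M : Matrix (Fin n) (Fin n) F) (hM : IsUnit M)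
    (hfact : B = M * diagSeq F n (r - 1) δ * Mᵀ) :
    Nat.card {v : Fin n → F // (border B v).rank = r} = Ndelta F δ r ∧
    (Nat.card {v : Fin n → F // (border B v).rank = r + 1} : ℤ) =
      (q : ℤ) ^ r - (Ndelta F δ r : ℤ) ∧
    (Nat.card {v : Fin n → F // (border B v).rank = r + 2} : ℤ) =
      (q : ℤ) ^ n - (q : ℤ) ^ r := by
  classical
  have hq1 : 1 ≤ q := hq ▸ Fintype.card_pos
  have hrn : r ≤ n := by
    have h := Matrix.rank_le_card_width B
    rw [hrank] at h
    simpa using h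
  have h2 : (2 : F) ≠ 0 := by
    intro h20
    have hchar : ringChar F ∣ 2 := (CharP.cast_eq_zero_iff F (ringChar F) 2).mp
      (by exact_mod_cast h20)
    have hc2 : ringChar F = 2 := by
      rcases (Nat.dvd_prime Nat.prime_two).mp hchar with h | h
      · have h1 : ((1 : ℕ) : F) = 0 := (CharP.cast_eq_zero_iff F (ringChar F) 1).mpr (by rw [h])
        rw [Nat.cast_one] at h1
        exact absurd h1 one_ne_zero
      · exact h
    have hev := FiniteField.even_card_iff_char_two.mp hc2
    rw [hq] at hev
    obtain ⟨k, hk⟩ := hodd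
    omega
  set D : Matrix (Fin n) (Fin n) F := diagonal (dvec n r δ) with hD
  have hfact' : B = M * D * Mᵀ := hfact
  have key : ∀ w : Fin n → F, (border B (M *ᵥ w)).rank = (borderC 0 D w).rank := by
    intro w
    have hb : border B (M *ᵥ w) = oneOplus M * borderC 0 D w * (oneOplus M)ᵀ := by
      rw [oneOplus_conj, ← hfact']
      rfl
    rw [hb, rank_conj _ _ (isUnit_oneOplus hM)]
  have hMdet : IsUnit M.det := (Matrix.isUnit_iff_isUnit_det M).mp hM
  let eM : (Fin n → F) ≃ (Fin n → F) :=
    { toFun := fun w => M *ᵥ w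
      invFun := fun v => M⁻¹ *ᵥ v
      left_inv := fun w => by
        show M⁻¹ *ᵥ (M *ᵥ w) = w
        rw [Matrix.mulVec_mulVec, Matrix.nonsing_inv_mul _ hMdet, Matrix.one_mulVec]
      right_inv := fun v => by
        show M *ᵥ (M⁻¹ *ᵥ v) = v
        rw [Matrix.mulVec_mulVec, Matrix.mul_nonsing_inv _ hMdet, Matrix.one_mulVec] }
  have cardEq : ∀ k : ℕ, Nat.card {v : Fin n → F // (border B v).rank = k} =
      Nat.card {w : Fin n → F // (borderC 0 D w).rank = k} := by
    intro k
    refine (Nat.card_congr (Equiv.subtypeEquiv eM (fun w => ?_))).symm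
    show (borderC 0 D w).rank = k ↔ (border B (M *ᵥ w)).rank = k
    rw [key w]
  have tri : ∀ w : Fin n → F,
      ((∀ i : Fin n, ¬ (i : ℕ) < r → w i = 0) ∧ Qf n r δ w = 0 ∧ (borderC 0 D w).rank = r) ∨
      ((∀ i : Fin n, ¬ (i : ℕ) < r → w i = 0) ∧ Qf n r δ w ≠ 0 ∧
        (borderC 0 D w).rank = r + 1) ∨
      ((¬ ∀ i : Fin n, ¬ (i : ℕ) < r → w i = 0) ∧ (borderC 0 D w).rank = r + 2) := by
    intro w
    by_cases hS : ∀ i : Fin n, ¬ (i : ℕ) < r → w i = 0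
    · by_cases hQ0 : Qf n r δ w = 0
      · exact Or.inl ⟨hS, hQ0, rank_caseA0 hr hrn hδ w (fun i hi => hS i (not_lt.mpr hi)) hQ0⟩
      · exact Or.inr (Or.inl ⟨hS, hQ0,
          rank_caseA1 hr hrn hδ w (fun i hi => hS i (not_lt.mpr hi)) hQ0⟩)
    · have hS' := hS
      push_neg at hS'
      obtain ⟨j, hj1, hj2⟩ := hS'
      exact Or.inr (Or.inr ⟨hS, rank_caseB hr hrn hδ h2 w j (not_lt.mpr hj1) hj2⟩)
  have iffA : ∀ w : Fin n → F, ((borderC 0 D w).rank = r ↔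
      ((∀ i : Fin n, ¬ (i : ℕ) < r → w i = 0) ∧ Qf n r δ w = 0)) := by
    intro w
    rcases tri w with ⟨h1, hh2, h3⟩ | ⟨h1, hh2, h3⟩ | ⟨h1, h3⟩
    · rw [h3]
      exact ⟨fun _ => ⟨h1, hh2⟩, fun _ => rfl⟩
    · rw [h3]
      constructor
      · intro hh; omega
      · rintro ⟨_, hq0⟩; exact absurd hq0 hh2
    · rw [h3]
      constructor
      · intro hh; omega
      · rintro ⟨hs, _⟩; exact absurd hs h1
  have iffB : ∀ w : Fin n → F, ((borderC 0 D w).rank = r + 1 ↔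
      ((∀ i : Fin n, ¬ (i : ℕ) < r → w i = 0) ∧ ¬ Qf n r δ w = 0)) := by
    intro w
    rcases tri w with ⟨h1, hh2, h3⟩ | ⟨h1, hh2, h3⟩ | ⟨h1, h3⟩
    · rw [h3]
      constructor
      · intro hh; omega
      · rintro ⟨_, hq0⟩; exact absurd hh2 hq0
    · rw [h3]
      exact ⟨fun _ => ⟨h1, hh2⟩, fun _ => rfl⟩
    · rw [h3]
      constructor
      · intro hh; omega
      · rintro ⟨hs, _⟩; exact absurd hs h1
  have iffC : ∀ w : Fin n → F, ((borderC 0 D w).rank = r + 2 ↔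
      ¬ (∀ i : Fin n, ¬ (i : ℕ) < r → w i = 0)) := by
    intro w
    rcases tri w with ⟨h1, hh2, h3⟩ | ⟨h1, hh2, h3⟩ | ⟨h1, h3⟩
    · rw [h3]
      constructor
      · intro hh; omega
      · intro hs; exact absurd h1 hs
    · rw [h3]
      constructor
      · intro hh; omega
      · intro hs; exact absurd h1 hs
    · rw [h3]
      exact ⟨fun _ => h1, fun _ => rfl⟩
  -- counting
  have hNd : Ndelta F δ r = Fintype.card {x : Fin r → F //
      ∑ i : Fin r, (if (i : ℕ) = r - 1 then δ else 1) * x i ^ 2 = 0} := by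
    rw [Ndelta, Nat.card_eq_fintype_card]
  have hcardFun : Fintype.card (Fin r → F) = q ^ r := by
    rw [Fintype.card_fun, Fintype.card_fin, hq]
  have hNdle : Ndelta F δ r ≤ q ^ r := by
    rw [hNd, ← hcardFun]
    exact Fintype.card_subtype_le _
  have cA : Nat.card {w : Fin n → F // (borderC 0 D w).rank = r} = Ndelta F δ r := by
    rw [Nat.card_congr (Equiv.subtypeEquivRight iffA),
      ← Nat.card_congr (countEquiv hδ hr hrn (fun t => t = 0))]
    rfl
  have cB : Nat.card {w : Fin n → F // (borderC 0 D w).rank = r + 1} =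
      q ^ r - Ndelta F δ r := by
    rw [Nat.card_congr (Equiv.subtypeEquivRight iffB),
      ← Nat.card_congr (countEquiv hδ hr hrn (fun t => ¬ t = 0)),
      Nat.card_eq_fintype_card, Fintype.card_subtype_compl, hcardFun, hNd]
  have cS : Nat.card {w : Fin n → F // ∀ i : Fin n, ¬ (i : ℕ) < r → w i = 0} = q ^ r := by
    rw [← Nat.card_congr (restrEquiv (F := F) hrn), Nat.card_eq_fintype_card, hcardFun]
  have cC : Nat.card {w : Fin n → F // (borderC 0 D w).rank = r + 2} = q ^ n - q ^ r := by
    rw [Nat.card_congr (Equiv.subtypeEquivRight iffC), Nat.card_eq_fintype_card,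
      Fintype.card_subtype_compl]
    have e1 : Fintype.card (Fin n → F) = q ^ n := by
      rw [Fintype.card_fun, Fintype.card_fin, hq]
    have e2 : Fintype.card {x : Fin n → F // ∀ i : Fin n, ¬ (i : ℕ) < r → x i = 0} = q ^ r := by
      rw [← Nat.card_eq_fintype_card]
      exact cS
    rw [e1, e2]
  have hqrn : q ^ r ≤ q ^ n := Nat.pow_le_pow_right hq1 hrn
  refine ⟨?_, ?_, ?_⟩
  · rw [cardEq r, cA]
  · rw [cardEq (r + 1), cB, Nat.cast_sub hNdle]
    push_cast
    ring
  · rw [cardEq (r + 2), cC, Nat.cast_sub hqrn]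
    push_cast
    ring
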